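/- Let K*(s,v) = exp(−‖s − v‖²/2) be the isotropic Gaussian kernel on ℝ^D × ℝ^D, Ω' an invertible symmetric D×D matrix, and V ⊂ ℝ^D a set containing a point v₀ and all points v₀ + ∑_d λ_d γ_d e_d with γ_d ∈ {−1,0,1} and fixed λ_d > 0. Fix s ∈ ℝ^D. If real constants c, a_i (1 ≤ i ≤ D), a_{jk} (1 ≤ j ≤ k ≤ D) satisfy c K*(Ω's, Ω'v) + ∑_i a_i ∂_i^x K*(Ω's, Ω'v) + ∑_{j≤k} a_{jk} ∂²_{jk}^x K*(Ω's, Ω'v) = 0 for all v ∈ V, then all constants are zero. -/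

import Mathlib

open Finset

/-- The isotropic Gaussian kernel `K*(x,y) = exp(-‖x-y‖²/2)` on `ℝ^D`. -/
noncomputable def isoGaussKernel {D : ℕ} (x y : Fin D → ℝ) : ℝ :=
  Real.exp (-(∑ i, (x i - y i) ^ 2) / 2)

/-- Partial derivative `∂_i` in the first argument. -/
noncomputable def pd {D : ℕ} (i : Fin D) (f : (Fin D → ℝ) → ℝ) (x : Fin D → ℝ) : ℝ :=
  fderiv ℝ f x (Pi.single i 1)

/-- Second partial derivative `∂²_{jk}` in the first argument. -/
noncomputable def pdd {D : ℕ} (j k : Fin D) (f : (Fin D → ℝ) → ℝ) (x : Fin D → ℝ) : ℝ :=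
  fderiv ℝ (fun x' => fderiv ℝ f x' (Pi.single k 1)) x (Pi.single j 1)

section Aux

lemma isoGauss_hasFDerivAt {D : ℕ} (y x : Fin D → ℝ) :
    HasFDerivAt (fun x => isoGaussKernel x y)
      (isoGaussKernel x y •
        ∑ i, (-(x i - y i)) • (ContinuousLinearMap.proj i : (Fin D → ℝ) →L[ℝ] ℝ)) x := by
  have hg : HasFDerivAt (fun x : Fin D → ℝ => -(∑ i, (x i - y i) ^ 2) / 2)
      (∑ i, (-(x i - y i)) • (ContinuousLinearMap.proj i : (Fin D → ℝ) →L[ℝ] ℝ)) x := by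
    have hsum : HasFDerivAt (fun x : Fin D → ℝ => ∑ i, (x i - y i) ^ 2)
        (∑ i, (2 * (x i - y i)) • (ContinuousLinearMap.proj i : (Fin D → ℝ) →L[ℝ] ℝ)) x := by
      apply HasFDerivAt.fun_sum
      intro i _
      have h0 : HasFDerivAt (fun x : Fin D → ℝ => x i)
          (ContinuousLinearMap.proj i : (Fin D → ℝ) →L[ℝ] ℝ) x :=
        (ContinuousLinearMap.proj i : (Fin D → ℝ) →L[ℝ] ℝ).hasFDerivAt
      have h1 := h0.sub_const (y i)
      have := h1.fun_mul h1
      simpa [sq, two_mul, add_smul, smul_smul] using this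
    have h2 := hsum.fun_const_smul (-(1/2) : ℝ)
    have hfun : (fun x : Fin D → ℝ => -(∑ i, (x i - y i) ^ 2) / 2)
        = fun x : Fin D → ℝ => (-(1/2) : ℝ) • ∑ i, (x i - y i) ^ 2 := by
      funext x; simp [smul_eq_mul]; ring
    rw [hfun]
    refine h2.congr_fderiv ?_
    rw [Finset.smul_sum]
    refine Finset.sum_congr rfl fun i _ => ?_
    rw [smul_smul]
    congr 1
    ring
  have := hg.exp
  simpa [isoGaussKernel] using this

lemma pd_eval {D : ℕ} (y x : Fin D → ℝ) (k : Fin D) :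
    fderiv ℝ (fun x => isoGaussKernel x y) x (Pi.single k 1)
      = -(x k - y k) * isoGaussKernel x y := by
  rw [(isoGauss_hasFDerivAt y x).fderiv]
  simp only [ContinuousLinearMap.smul_apply, ContinuousLinearMap.coe_sum',
    Finset.sum_apply, ContinuousLinearMap.smul_apply, ContinuousLinearMap.proj_apply,
    smul_eq_mul]
  rw [Finset.sum_eq_single k]
  · simp [mul_comm]
  · intro b _ hb; simp [Pi.single_apply, hb]
  · simp

lemma pd_eq {D : ℕ} (y x : Fin D → ℝ) (i : Fin D) :
    pd i (fun x => isoGaussKernel x y) x = -(x i - y i) * isoGaussKernel x y :=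
  pd_eval y x i

lemma pdd_eq {D : ℕ} (y x : Fin D → ℝ) (j k : Fin D) :
    pdd j k (fun x => isoGaussKernel x y) x
      = ((x j - y j) * (x k - y k) - (if j = k then 1 else 0)) * isoGaussKernel x y := by
  unfold pdd
  have hF : (fun x' : Fin D → ℝ => fderiv ℝ (fun x => isoGaussKernel x y) x' (Pi.single k 1))
      = fun x' => -(x' k - y k) * isoGaussKernel x' y := by
    funext x'; exact pd_eval y x' k
  rw [hF]
  have h0 : HasFDerivAt (fun x : Fin D → ℝ => x k)
      (ContinuousLinearMap.proj k : (Fin D → ℝ) →L[ℝ] ℝ) x :=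
    (ContinuousLinearMap.proj k : (Fin D → ℝ) →L[ℝ] ℝ).hasFDerivAt
  have h1 := ((h0.sub_const (y k)).fun_neg).fun_mul (isoGauss_hasFDerivAt y x)
  rw [h1.fderiv]
  simp only [ContinuousLinearMap.add_apply, ContinuousLinearMap.smul_apply,
    ContinuousLinearMap.neg_apply, ContinuousLinearMap.proj_apply, smul_eq_mul]
  have hsum : ((∑ i, (-(x i - y i)) • (ContinuousLinearMap.proj i : (Fin D → ℝ) →L[ℝ] ℝ))
      (Pi.single j 1)) = -(x j - y j) := by
    simp only [ContinuousLinearMap.coe_sum', Finset.sum_apply, ContinuousLinearMap.smul_apply,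
      ContinuousLinearMap.proj_apply, smul_eq_mul]
    rw [Finset.sum_eq_single j]
    · simp
    · intro b _ hb; simp [Pi.single_apply, hb]
    · simp
  rw [hsum, Pi.single_apply]
  by_cases h : j = k
  · subst h; simp; ring
  · simp [h, Ne.symm h]; ring

noncomputable def Pq {D : ℕ} (c : ℝ) (a : Fin D → ℝ) (a2 : Fin D → Fin D → ℝ)
    (u : Fin D → ℝ) : ℝ :=
  c - (∑ i, a i * u i)
    + ∑ j, ∑ k, if j ≤ k then a2 j k * (u j * u k - if j = k then 1 else 0) else 0

lemma sum_comb3 {α} (s : Finset α) (f g h : α → ℝ) :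
    (∑ i ∈ s, f i) + (∑ i ∈ s, g i) - 2 * (∑ i ∈ s, h i)
      = ∑ i ∈ s, (f i + g i - 2 * h i) := by
  rw [Finset.mul_sum, ← Finset.sum_add_distrib, ← Finset.sum_sub_distrib]

lemma sum_comb4 {α} (s : Finset α) (f g h k : α → ℝ) :
    (∑ i ∈ s, f i) - (∑ i ∈ s, g i) - (∑ i ∈ s, h i) + (∑ i ∈ s, k i)
      = ∑ i ∈ s, (f i - g i - h i + k i) := by
  rw [← Finset.sum_sub_distrib, ← Finset.sum_sub_distrib, ← Finset.sum_add_distrib]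

lemma Pq_factor {D : ℕ} (c : ℝ) (a : Fin D → ℝ) (a2 : Fin D → Fin D → ℝ)
    (u : Fin D → ℝ) (K : ℝ) :
    c * K + (∑ i, a i * (-(u i) * K))
      + (∑ j, ∑ k, if j ≤ k then
          a2 j k * ((u j * u k - if j = k then 1 else 0) * K) else 0)
      = Pq c a a2 u * K := by
  unfold Pq
  rw [add_mul, sub_mul, Finset.sum_mul, Finset.sum_mul]
  have h1 : (∑ i, a i * (-(u i) * K)) = -∑ i, a i * u i * K := by
    rw [← Finset.sum_neg_distrib]
    exact Finset.sum_congr rfl fun i _ => by ring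
  have h2 : ∀ j : Fin D, (∑ k, if j ≤ k then
        a2 j k * ((u j * u k - if j = k then 1 else 0) * K) else 0)
      = (∑ k, if j ≤ k then a2 j k * (u j * u k - if j = k then 1 else 0) else 0) * K := by
    intro j
    rw [Finset.sum_mul]
    exact Finset.sum_congr rfl fun k _ => by split_ifs <;> ring
  calc c * K + (∑ i, a i * (-(u i) * K)) + _
      = c * K + (-∑ i, a i * u i * K) + ∑ j, (∑ k, if j ≤ k then
          a2 j k * (u j * u k - if j = k then 1 else 0) else 0) * K := by
        rw [h1]; congr 1; exact Finset.sum_congr rfl fun j _ => h2 j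
    _ = _ := by ring

lemma combA {D : ℕ} (c : ℝ) (a : Fin D → ℝ) (a2 : Fin D → Fin D → ℝ) (w n : Fin D → ℝ) :
    Pq c a a2 (fun i => w i - n i) + Pq c a a2 (fun i => w i + n i) - 2 * Pq c a a2 w
      = 2 * ∑ j, ∑ k, (if j ≤ k then a2 j k else 0) * (n j * n k) := by
  unfold Pq
  have e1 : (∑ i, a i * (w i - n i)) + (∑ i, a i * (w i + n i)) - 2 * (∑ i, a i * w i)
      = 0 := by
    rw [sum_comb3]
    exact Finset.sum_eq_zero fun i _ => by ring
  have e2 : (∑ j, ∑ k, if j ≤ k then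
        a2 j k * ((w j - n j) * (w k - n k) - if j = k then 1 else 0) else 0)
      + (∑ j, ∑ k, if j ≤ k then
        a2 j k * ((w j + n j) * (w k + n k) - if j = k then 1 else 0) else 0)
      - 2 * (∑ j, ∑ k, if j ≤ k then
        a2 j k * (w j * w k - if j = k then 1 else 0) else 0)
      = 2 * ∑ j, ∑ k, (if j ≤ k then a2 j k else 0) * (n j * n k) := by
    rw [sum_comb3, Finset.mul_sum]
    refine Finset.sum_congr rfl fun j _ => ?_
    rw [sum_comb3, Finset.mul_sum]
    refine Finset.sum_congr rfl fun k _ => ?_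
    split_ifs <;> ring
  linarith

lemma combB {D : ℕ} (c : ℝ) (a : Fin D → ℝ) (a2 : Fin D → Fin D → ℝ) (w n m : Fin D → ℝ) :
    Pq c a a2 (fun i => w i - n i - m i) - Pq c a a2 (fun i => w i - n i)
      - Pq c a a2 (fun i => w i - m i) + Pq c a a2 w
      = ∑ j, ∑ k, (if j ≤ k then a2 j k else 0) * (n j * m k + m j * n k) := by
  unfold Pq
  have e1 : (∑ i, a i * (w i - n i - m i)) - (∑ i, a i * (w i - n i))
      - (∑ i, a i * (w i - m i)) + (∑ i, a i * w i) = 0 := by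
    rw [sum_comb4]
    exact Finset.sum_eq_zero fun i _ => by ring
  have e2 : (∑ j, ∑ k, if j ≤ k then
        a2 j k * ((w j - n j - m j) * (w k - n k - m k) - if j = k then 1 else 0) else 0)
      - (∑ j, ∑ k, if j ≤ k then
        a2 j k * ((w j - n j) * (w k - n k) - if j = k then 1 else 0) else 0)
      - (∑ j, ∑ k, if j ≤ k then
        a2 j k * ((w j - m j) * (w k - m k) - if j = k then 1 else 0) else 0)
      + (∑ j, ∑ k, if j ≤ k then
        a2 j k * (w j * w k - if j = k then 1 else 0) else 0)
      = ∑ j, ∑ k, (if j ≤ k then a2 j k else 0) * (n j * m k + m j * n k) := by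
    rw [sum_comb4]
    refine Finset.sum_congr rfl fun j _ => ?_
    rw [sum_comb4]
    refine Finset.sum_congr rfl fun k _ => ?_
    split_ifs <;> ring
  linarith

lemma Pq_a2_zero {D : ℕ} (c : ℝ) (a : Fin D → ℝ) (a2 : Fin D → Fin D → ℝ)
    (ha2 : ∀ j k : Fin D, j ≤ k → a2 j k = 0) (u : Fin D → ℝ) :
    Pq c a a2 u = c - ∑ i, a i * u i := by
  unfold Pq
  have h : (∑ j, ∑ k : Fin D, if j ≤ k then
      a2 j k * (u j * u k - if j = k then 1 else 0) else 0) = 0 := by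
    refine Finset.sum_eq_zero fun j _ => Finset.sum_eq_zero fun k _ => ?_
    split_ifs with hjk h2
    · rw [ha2 j k hjk, zero_mul]
    · rw [ha2 j k hjk, zero_mul]
    · rfl
  rw [h, add_zero]

lemma swap_sum {D : ℕ} (a2 : Fin D → Fin D → ℝ) (p q : Fin D → ℝ) :
    ∑ j, ∑ k, ((if j ≤ k then a2 j k else 0) + (if k ≤ j then a2 k j else 0)) * (p j * q k)
      = ∑ j, ∑ k, (if j ≤ k then a2 j k else 0) * (p j * q k + q j * p k) := by
  have h1 : (∑ j, ∑ k, (if k ≤ j then a2 k j else 0) * (p j * q k))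
      = ∑ j, ∑ k, (if j ≤ k then a2 j k else 0) * (q j * p k) := by
    rw [Finset.sum_comm]
    exact Finset.sum_congr rfl fun x _ => Finset.sum_congr rfl fun y _ => by
      split_ifs <;> ring
  have hL : (∑ j, ∑ k,
        ((if j ≤ k then a2 j k else 0) + (if k ≤ j then a2 k j else 0)) * (p j * q k))
      = (∑ j, ∑ k, (if j ≤ k then a2 j k else 0) * (p j * q k))
        + (∑ j, ∑ k, (if k ≤ j then a2 k j else 0) * (p j * q k)) := by
    rw [← Finset.sum_add_distrib]
    refine Finset.sum_congr rfl fun j _ => ?_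
    rw [← Finset.sum_add_distrib]
    exact Finset.sum_congr rfl fun k _ => by ring
  have hR : (∑ j, ∑ k, (if j ≤ k then a2 j k else 0) * (p j * q k + q j * p k))
      = (∑ j, ∑ k, (if j ≤ k then a2 j k else 0) * (p j * q k))
        + (∑ j, ∑ k, (if j ≤ k then a2 j k else 0) * (q j * p k)) := by
    rw [← Finset.sum_add_distrib]
    refine Finset.sum_congr rfl fun j _ => ?_
    rw [← Finset.sum_add_distrib]
    exact Finset.sum_congr rfl fun k _ => by ring
  rw [hL, hR, h1]

lemma sum_single_mul {D : ℕ} (Om : Matrix (Fin D) (Fin D) ℝ) (lam : Fin D → ℝ)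
    (i d : Fin D) (t0 : ℝ) :
    ∑ t, Om i t * (lam t * (Pi.single d t0 : Fin D → ℝ) t) = Om i d * lam d * t0 := by
  rw [Finset.sum_eq_single d]
  · simp [mul_assoc]
  · intro b _ hb; simp [Pi.single_apply, hb]
  · simp

end Aux

/-- non-degeneracy of the isotropic Gaussian kernel and its first and
second derivatives under an invertible symmetric linear transformation `Ω'`,
evaluated on a `3^D`-point grid contained in `V`. -/
theorem isoGaussKernel_nondegenerate {D : ℕ}
    (Om : Matrix (Fin D) (Fin D) ℝ) (hsym : Om.IsSymm) (hinv : IsUnit Om.det)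
    (V : Set (Fin D → ℝ)) (v₀ : Fin D → ℝ) (lam : Fin D → ℝ) (hlam : ∀ d, 0 < lam d)
    (hgrid : ∀ γ : Fin D → ℝ, (∀ d, γ d = -1 ∨ γ d = 0 ∨ γ d = 1) →
      (fun d => v₀ d + lam d * γ d) ∈ V)
    (s : Fin D → ℝ)
    (c : ℝ) (a : Fin D → ℝ) (a2 : Fin D → Fin D → ℝ)
    (hvanish : ∀ v ∈ V,
      c * isoGaussKernel (Om.mulVec s) (Om.mulVec v)
        + (∑ i, a i * pd i (fun x => isoGaussKernel x (Om.mulVec v)) (Om.mulVec s))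
        + (∑ j, ∑ k, if j ≤ k then
            a2 j k * pdd j k (fun x => isoGaussKernel x (Om.mulVec v)) (Om.mulVec s)
          else 0) = 0) :
    c = 0 ∧ a = 0 ∧ ∀ j k : Fin D, j ≤ k → a2 j k = 0 := by
  classical
  -- key evaluation on the grid
  have hKey : ∀ γ : Fin D → ℝ, (∀ d, γ d = -1 ∨ γ d = 0 ∨ γ d = 1) →
      Pq c a a2 (fun i => Om.mulVec s i - Om.mulVec v₀ i
        - ∑ t, Om i t * (lam t * γ t)) = 0 := by
    intro γ hγ
    have hv := hvanish _ (hgrid γ hγ)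
    set Y := Om.mulVec (fun d => v₀ d + lam d * γ d) with hY
    simp only [pd_eq, pdd_eq] at hv
    have h2 : Pq c a a2 (fun i => Om.mulVec s i - Y i)
        * isoGaussKernel (Om.mulVec s) Y = 0 := by
      rw [← Pq_factor]; exact hv
    have hKne : isoGaussKernel (Om.mulVec s) Y ≠ 0 :=
      ne_of_gt (Real.exp_pos _)
    have h3 : Pq c a a2 (fun i => Om.mulVec s i - Y i) = 0 := by
      rcases mul_eq_zero.mp h2 with h | h
      · exact h
      · exact absurd h hKne
    have hYi : ∀ i, Y i = Om.mulVec v₀ i + ∑ t, Om i t * (lam t * γ t) := by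
      intro i
      simp [hY, Matrix.mulVec, dotProduct, mul_add, Finset.sum_add_distrib]
    have hfun : (fun i => Om.mulVec s i - Om.mulVec v₀ i - ∑ t, Om i t * (lam t * γ t))
        = fun i => Om.mulVec s i - Y i := by
      funext i; rw [hYi i]; ring
    rw [hfun]
    exact h3
  -- specialization to particular grid points
  have h00 : Pq c a a2 (fun i => Om.mulVec s i - Om.mulVec v₀ i) = 0 := by
    have := hKey 0 (fun d => Or.inr (Or.inl rfl))
    simpa using this
  have hp : ∀ d, Pq c a a2
      (fun i => (Om.mulVec s i - Om.mulVec v₀ i) - Om i d * lam d) = 0 := by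
    intro d
    have hg : ∀ t, (Pi.single d 1 : Fin D → ℝ) t = -1 ∨ (Pi.single d 1 : Fin D → ℝ) t = 0
        ∨ (Pi.single d 1 : Fin D → ℝ) t = 1 := by
      intro t; rcases eq_or_ne t d with h | h
      · subst h; simp
      · right; left; simp [Pi.single_apply, h]
    have := hKey (Pi.single d 1 : Fin D → ℝ) hg
    have hfun : (fun i => Om.mulVec s i - Om.mulVec v₀ i
          - ∑ t, Om i t * (lam t * (Pi.single d 1 : Fin D → ℝ) t))
        = fun i => (Om.mulVec s i - Om.mulVec v₀ i) - Om i d * lam d := by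
      funext i; rw [sum_single_mul]; ring
    rwa [hfun] at this
  have hm : ∀ d, Pq c a a2
      (fun i => (Om.mulVec s i - Om.mulVec v₀ i) + Om i d * lam d) = 0 := by
    intro d
    have hg : ∀ t, (Pi.single d (-1) : Fin D → ℝ) t = -1 ∨ (Pi.single d (-1) : Fin D → ℝ) t = 0
        ∨ (Pi.single d (-1) : Fin D → ℝ) t = 1 := by
      intro t; rcases eq_or_ne t d with h | h
      · subst h; simp
      · right; left; simp [Pi.single_apply, h]
    have := hKey (Pi.single d (-1) : Fin D → ℝ) hg
    have hfun : (fun i => Om.mulVec s i - Om.mulVec v₀ i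
          - ∑ t, Om i t * (lam t * (Pi.single d (-1) : Fin D → ℝ) t))
        = fun i => (Om.mulVec s i - Om.mulVec v₀ i) + Om i d * lam d := by
      funext i; rw [sum_single_mul]; ring
    rwa [hfun] at this
  have hpe : ∀ d e, d ≠ e → Pq c a a2
      (fun i => (Om.mulVec s i - Om.mulVec v₀ i) - Om i d * lam d - Om i e * lam e)
        = 0 := by
    intro d e hde
    set γ : Fin D → ℝ := fun t => (Pi.single d 1 : Fin D → ℝ) t + (Pi.single e 1 : Fin D → ℝ) t with hγdef
    have hg : ∀ t, γ t = -1 ∨ γ t = 0 ∨ γ t = 1 := by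
      intro t
      rcases eq_or_ne t d with h | h
      · subst h; right; right; simp [hγdef, Pi.single_apply, hde, Ne.symm hde]
      · rcases eq_or_ne t e with h2 | h2
        · subst h2; right; right; simp [hγdef, Pi.single_apply, h]
        · right; left; simp [hγdef, Pi.single_apply, h, h2]
    have := hKey γ hg
    have hfun : (fun i => Om.mulVec s i - Om.mulVec v₀ i
          - ∑ t, Om i t * (lam t * γ t))
        = fun i => (Om.mulVec s i - Om.mulVec v₀ i) - Om i d * lam d - Om i e * lam e := by
      funext i
      have : (∑ t, Om i t * (lam t * γ t))
          = (∑ t, Om i t * (lam t * (Pi.single d 1 : Fin D → ℝ) t))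
            + ∑ t, Om i t * (lam t * (Pi.single e 1 : Fin D → ℝ) t) := by
        rw [← Finset.sum_add_distrib]
        exact Finset.sum_congr rfl fun t _ => by simp [hγdef]; ring
      rw [this, sum_single_mul, sum_single_mul]; ring
    rwa [hfun] at this
  -- quadratic coefficients vanish
  have hA : ∀ d, (∑ j, ∑ k, (if j ≤ k then a2 j k else 0)
      * ((Om j d * lam d) * (Om k d * lam d))) = 0 := by
    intro d
    have hcomb := combA c a a2 (fun i => Om.mulVec s i - Om.mulVec v₀ i)
      (fun i => Om i d * lam d)
    have e1 := hp d
    have e2 := hm d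
    have e3 := h00
    linarith [hcomb, e1, e2, e3]
  have hB2 : ∀ d e, d ≠ e → (∑ j, ∑ k, (if j ≤ k then a2 j k else 0)
      * ((Om j d * lam d) * (Om k e * lam e) + (Om j e * lam e) * (Om k d * lam d)))
        = 0 := by
    intro d e hde
    have hcomb := combB c a a2 (fun i => Om.mulVec s i - Om.mulVec v₀ i)
      (fun i => Om i d * lam d) (fun i => Om i e * lam e)
    linarith [hcomb, hpe d e hde, hp d, hp e, h00]
  have hQsym : ∀ d e, (∑ j, ∑ k,
      ((if j ≤ k then a2 j k else 0) + (if k ≤ j then a2 k j else 0))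
        * ((Om j d * lam d) * (Om k e * lam e))) = 0 := by
    intro d e
    rw [swap_sum]
    rcases eq_or_ne d e with h | h
    · subst h
      have hdup : (∑ j, ∑ k, (if j ≤ k then a2 j k else 0)
          * ((Om j d * lam d) * (Om k d * lam d) + (Om j d * lam d) * (Om k d * lam d)))
          = 2 * ∑ j, ∑ k, (if j ≤ k then a2 j k else 0)
            * ((Om j d * lam d) * (Om k d * lam d)) := by
        rw [Finset.mul_sum]
        refine Finset.sum_congr rfl fun j _ => ?_
        rw [Finset.mul_sum]
        exact Finset.sum_congr rfl fun k _ => by ring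
      rw [hdup, hA d, mul_zero]
    · exact hB2 d e h
  -- matrix reformulation
  set N : Matrix (Fin D) (Fin D) ℝ := Matrix.of fun j d => Om j d * lam d with hN
  have hNdet : IsUnit N.det := by
    have hNe : N = Om * Matrix.diagonal lam := by
      ext j d; simp [hN, Matrix.mul_diagonal]
    rw [hNe, Matrix.det_mul, Matrix.det_diagonal]
    exact hinv.mul (isUnit_iff_ne_zero.mpr
      (ne_of_gt (Finset.prod_pos fun d _ => hlam d)))
  set B : Matrix (Fin D) (Fin D) ℝ := Matrix.of fun j k =>
    (if j ≤ k then a2 j k else 0) + (if k ≤ j then a2 k j else 0) with hBdef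
  have hNBN : N.transpose * B * N = 0 := by
    ext d e
    simp only [Matrix.mul_apply, Matrix.zero_apply, Matrix.transpose_apply]
    have step0 : ∀ k, (∑ j, N j d * B j k) * N k e = ∑ j, N j d * B j k * N k e := by
      intro k; rw [Finset.sum_mul]
    calc (∑ k, (∑ j, N j d * B j k) * N k e)
        = ∑ k, ∑ j, N j d * B j k * N k e :=
          Finset.sum_congr rfl fun k _ => step0 k
      _ = ∑ j, ∑ k, N j d * B j k * N k e := Finset.sum_comm
      _ = ∑ j, ∑ k, ((if j ≤ k then a2 j k else 0) + (if k ≤ j then a2 k j else 0))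
            * ((Om j d * lam d) * (Om k e * lam e)) := by
          refine Finset.sum_congr rfl fun j _ => Finset.sum_congr rfl fun k _ => ?_
          simp only [hN, hBdef, Matrix.of_apply]
          ring
      _ = 0 := hQsym d e
  have hB0 : B = 0 := by
    have ht : IsUnit N.transpose.det := by rwa [Matrix.det_transpose]
    have h1 : N.transpose * B = 0 := by
      have := congrArg (fun M => M * N⁻¹) hNBN
      simpa [Matrix.mul_nonsing_inv_cancel_right _ _ hNdet] using this
    have := congrArg (fun M => N.transpose⁻¹ * M) h1
    simpa [Matrix.nonsing_inv_mul_cancel_left _ _ ht] using this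
  have ha2 : ∀ j k : Fin D, j ≤ k → a2 j k = 0 := by
    intro j k hjk
    have hb : B j k = 0 := by rw [hB0]; simp
    rcases eq_or_ne j k with h | h
    · subst h
      simp only [hBdef, Matrix.of_apply, le_refl, if_true] at hb
      linarith
    · have hk : ¬ k ≤ j := fun hk2 => h (le_antisymm hjk hk2)
      simpa [hBdef, Matrix.of_apply, hjk, hk] using hb
  have hlin : ∀ d, (∑ i, a i * (Om i d * lam d)) = 0 := by
    intro d
    have e1 := hp d
    have e2 := hm d
    rw [Pq_a2_zero c a a2 ha2] at e1 e2
    have comb : (∑ i, a i * ((Om.mulVec s i - Om.mulVec v₀ i) + Om i d * lam d))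
        - (∑ i, a i * ((Om.mulVec s i - Om.mulVec v₀ i) - Om i d * lam d))
        = 2 * ∑ i, a i * (Om i d * lam d) := by
      rw [Finset.mul_sum, ← Finset.sum_sub_distrib]
      exact Finset.sum_congr rfl fun i _ => by ring
    linarith
  have ha : a = 0 := by
    have hNt : IsUnit N.transpose.det := by rwa [Matrix.det_transpose]
    have hv : N.transpose.mulVec a = 0 := by
      funext d
      simp only [Matrix.mulVec, dotProduct, Matrix.transpose_apply, Pi.zero_apply]
      exact (Finset.sum_congr rfl fun i _ => by
        simp only [hN, Matrix.of_apply]; ring).trans (hlin d)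
    have := congrArg (fun v => (N.transpose)⁻¹.mulVec v) hv
    simpa [Matrix.mulVec_mulVec, Matrix.nonsing_inv_mul _ hNt] using this
  have hc : c = 0 := by
    have h := h00
    rw [Pq_a2_zero c a a2 ha2] at h
    simpa [ha] using h
  exact ⟨hc, ha, ha2⟩
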